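/- Let D be the regular hexagon with vertices (1+√3,0), (1,1), (-1,1), (-1-√3,0), (-1,-1), (1,-1). For no choice of λ ∈ ℝ is the rule L_λ(f) = λ·(4+2√3)·f(0,0) + (1-λ)·((4+2√3)/6)·Σ f(vertices) exact simultaneously for f = x² and f = y², since ∫∫_D x² dA = 16/3+3√3 and ∫∫_D y² dA = 4/3+√3/3 but L_λ(x²)/L_λ(y²) is independent of λ (both are proportional to (1-λ)) with the wrong ratio. -/

import Mathlib

open MeasureTheory Real Set

/-- The regular hexagon with vertices (1+√3,0), (1,1), (-1,1), (-1-√3,0),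
(-1,-1), (1,-1). -/
noncomputable def Hex : Set (Fin 2 → ℝ) :=
  convexHull ℝ {![1 + Real.sqrt 3, 0], ![1, 1], ![-1, 1],
    ![-(1 + Real.sqrt 3), 0], ![-1, -1], ![1, -1]}

/-- The weighted midpoint/vertex rule for the hexagon with parameter λ. -/
noncomputable def hexRule (l : ℝ) (f : (Fin 2 → ℝ) → ℝ) : ℝ :=
  l * (4 + 2 * Real.sqrt 3) * f ![0, 0]
    + (1 - l) * ((4 + 2 * Real.sqrt 3) / 6) *
      (f ![1 + Real.sqrt 3, 0] + f ![1, 1] + f ![-1, 1]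
        + f ![-(1 + Real.sqrt 3), 0] + f ![-1, -1] + f ![1, -1])

lemma s3_pos : (0:ℝ) < Real.sqrt 3 := Real.sqrt_pos.2 (by norm_num)
lemma s3_sq : Real.sqrt 3 * Real.sqrt 3 = 3 := Real.mul_self_sqrt (by norm_num)
lemma s3_lt : Real.sqrt 3 < 2 := by nlinarith [s3_sq, s3_pos]
lemma s3_gt : (1:ℝ) < Real.sqrt 3 := by nlinarith [s3_sq, s3_pos]

lemma comb3 {E : Type*} [AddCommGroup E] [Module ℝ E] {s : Set E} (hs : Convex ℝ s)
    {a b c : E} (ha : a ∈ s) (hb : b ∈ s) (hc : c ∈ s) {wa wb wc : ℝ}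
    (h0a : 0 ≤ wa) (h0b : 0 ≤ wb) (h0c : 0 ≤ wc) (hsum : wa + wb + wc = 1) :
    wa • a + wb • b + wc • c ∈ s := by
  have := hs.sum_mem (t := Finset.univ) (w := ![wa, wb, wc]) (z := ![a, b, c])
    (by intro i _; fin_cases i <;> assumption)
    (by simp [Fin.sum_univ_three, hsum])
    (by intro i _; fin_cases i <;> assumption)
  simpa [Fin.sum_univ_three] using this

lemma comb4 {E : Type*} [AddCommGroup E] [Module ℝ E] {s : Set E} (hs : Convex ℝ s)
    {a b c d : E} (ha : a ∈ s) (hb : b ∈ s) (hc : c ∈ s) (hd : d ∈ s) {wa wb wc wd : ℝ}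
    (h0a : 0 ≤ wa) (h0b : 0 ≤ wb) (h0c : 0 ≤ wc) (h0d : 0 ≤ wd)
    (hsum : wa + wb + wc + wd = 1) :
    wa • a + wb • b + wc • c + wd • d ∈ s := by
  have := hs.sum_mem (t := Finset.univ) (w := ![wa, wb, wc, wd]) (z := ![a, b, c, d])
    (by intro i _; fin_cases i <;> assumption)
    (by simp [Fin.sum_univ_four]; linarith)
    (by intro i _; fin_cases i <;> assumption)
  simpa [Fin.sum_univ_four, add_assoc] using this

lemma mem_hex (x y : ℝ) (hy : |y| ≤ 1)
    (hxy : |x| + Real.sqrt 3 * |y| ≤ 1 + Real.sqrt 3) : ![x, y] ∈ Hex := by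
  have hs0 := s3_pos
  have hs2 := s3_sq
  have hconv : Convex ℝ Hex := convex_convexHull ℝ _
  have hv1 : ![1 + Real.sqrt 3, 0] ∈ Hex := subset_convexHull ℝ _ (by simp)
  have hv2 : ![(1:ℝ), 1] ∈ Hex := subset_convexHull ℝ _ (by simp)
  have hv3 : ![(-1:ℝ), 1] ∈ Hex := subset_convexHull ℝ _ (by simp)
  have hv4 : ![-(1 + Real.sqrt 3), 0] ∈ Hex := subset_convexHull ℝ _ (by simp)
  have hv5 : ![(-1:ℝ), -1] ∈ Hex := subset_convexHull ℝ _ (by simp)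
  have hv6 : ![(1:ℝ), -1] ∈ Hex := subset_convexHull ℝ _ (by simp)
  generalize hgen : Real.sqrt 3 = s at hxy hs0 hs2 hv1 hv4
  have hsne : s ≠ 0 := ne_of_gt hs0
  have hy1 := abs_le.mp hy
  have hyl : s * -y ≤ s * |y| := mul_le_mul_of_nonneg_left (neg_le_abs y) hs0.le
  have hyr : s * y ≤ s * |y| := mul_le_mul_of_nonneg_left (le_abs_self y) hs0.le
  rcases le_total x (-1) with hx | hx
  · -- left triangle : (-(1+s),0), (-1,1), (-1,-1)
    have hax : |x| = -x := abs_of_nonpos (by linarith)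
    obtain ⟨γ, hγ⟩ : ∃ g, g = (-x - 1) / s := ⟨_, rfl⟩
    have hγs : γ * s = -x - 1 := by rw [hγ]; exact div_mul_cancel₀ _ (ne_of_gt hs0)
    have hγ0 : 0 ≤ γ := hγ ▸ div_nonneg (by linarith) hs0.le
    have hγa : γ ≤ 1 + y := by rw [hγ, div_le_iff₀ hs0]; nlinarith
    have hγb : γ ≤ 1 - y := by rw [hγ, div_le_iff₀ hs0]; nlinarith
    have key : γ • ![-(1 + s), 0] + ((1 - γ + y)/2) • ![(-1:ℝ), 1]
        + ((1 - γ - y)/2) • ![(-1:ℝ), -1] = ![x, y] := by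
      funext i
      fin_cases i
      · simp
        linear_combination -hγs
      · simp
        try ring
    rw [← key]
    exact comb3 hconv hv4 hv3 hv5 hγ0 (by linarith) (by linarith) (by ring)
  · rcases le_total x 1 with hx1 | hx1
    · have key : ((1+x)*(1+y)/4) • ![(1:ℝ),1] + ((1-x)*(1+y)/4) • ![(-1:ℝ),1]
          + ((1-x)*(1-y)/4) • ![(-1:ℝ),-1] + ((1+x)*(1-y)/4) • ![(1:ℝ),-1] = ![x,y] := by
        funext i
        fin_cases i <;> simp <;> ring
      rw [← key]
      exact comb4 hconv hv2 hv3 hv5 hv6 (by nlinarith) (by nlinarith) (by nlinarith)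
        (by nlinarith) (by ring)
    · -- right triangle : (1+s,0), (1,1), (1,-1)
      have hax : |x| = x := abs_of_nonneg (by linarith)
      obtain ⟨γ, hγ⟩ : ∃ g, g = (x - 1) / s := ⟨_, rfl⟩
      have hγs : γ * s = x - 1 := by rw [hγ]; exact div_mul_cancel₀ _ (ne_of_gt hs0)
      have hγ0 : 0 ≤ γ := hγ ▸ div_nonneg (by linarith) hs0.le
      have hγa : γ ≤ 1 + y := by rw [hγ, div_le_iff₀ hs0]; nlinarith
      have hγb : γ ≤ 1 - y := by rw [hγ, div_le_iff₀ hs0]; nlinarith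
      have key : γ • ![1 + s, 0] + ((1 - γ + y)/2) • ![(1:ℝ), 1]
          + ((1 - γ - y)/2) • ![(1:ℝ), -1] = ![x, y] := by
        funext i
        fin_cases i
        · simp
          linear_combination hγs
        · simp
          try ring
      rw [← key]
      exact comb3 hconv hv1 hv2 hv6 hγ0 (by linarith) (by linarith) (by ring)

lemma hex_eq : Hex = {v : Fin 2 → ℝ | |v 1| ≤ 1 ∧ |v 0| + Real.sqrt 3 * |v 1| ≤ 1 + Real.sqrt 3} := by
  have hs0 := s3_pos
  have hs2 := s3_sq
  apply Subset.antisymm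
  · apply convexHull_min
    · intro v hv
      simp only [Set.mem_insert_iff, Set.mem_singleton_iff] at hv
      have ha4 : |1 + Real.sqrt 3| = 1 + Real.sqrt 3 := abs_of_nonneg (by positivity)
      have ha5 : |-(1 + Real.sqrt 3)| = 1 + Real.sqrt 3 := by rw [abs_neg]; exact ha4
      have ha6 : |(-Real.sqrt 3 + -1 : ℝ)| = 1 + Real.sqrt 3 := by
        rw [show (-Real.sqrt 3 + -1 : ℝ) = -(1 + Real.sqrt 3) by ring, abs_neg]; exact ha4
      have ha7 : |(Real.sqrt 3 + 1 : ℝ)| = 1 + Real.sqrt 3 := by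
        rw [show (Real.sqrt 3 + 1 : ℝ) = 1 + Real.sqrt 3 by ring]; exact ha4
      rcases hv with h|h|h|h|h|h <;> subst h <;>
        exact ⟨by simp, by simp [ha4, ha5, ha6, ha7]⟩
    · intro v hv w hw a b ha hb hab
      have e0 : (a • v + b • w) 0 = a * v 0 + b * w 0 := rfl
      have e1 : (a • v + b • w) 1 = a * v 1 + b * w 1 := rfl
      constructor
      · rw [e1]
        calc |a * v 1 + b * w 1| ≤ |a * v 1| + |b * w 1| := abs_add_le _ _
          _ = a * |v 1| + b * |w 1| := by rw [abs_mul, abs_mul, abs_of_nonneg ha, abs_of_nonneg hb]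
          _ ≤ a * 1 + b * 1 := by
              gcongr; exacts [hv.1, hw.1]
          _ = 1 := by linarith
      · rw [e0, e1]
        have h0 : |a * v 0 + b * w 0| ≤ a * |v 0| + b * |w 0| := by
          calc |a * v 0 + b * w 0| ≤ |a * v 0| + |b * w 0| := abs_add_le _ _
            _ = a * |v 0| + b * |w 0| := by rw [abs_mul, abs_mul, abs_of_nonneg ha, abs_of_nonneg hb]
        have h1 : |a * v 1 + b * w 1| ≤ a * |v 1| + b * |w 1| := by
          calc |a * v 1 + b * w 1| ≤ |a * v 1| + |b * w 1| := abs_add_le _ _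
            _ = a * |v 1| + b * |w 1| := by rw [abs_mul, abs_mul, abs_of_nonneg ha, abs_of_nonneg hb]
        have hv2 := hv.2
        have hw2 := hw.2
        nlinarith [hv.1, hw.1]
  · intro v hv
    have : ![v 0, v 1] = v := by
      funext i; fin_cases i <;> rfl
    rw [← this]
    exact mem_hex _ _ hv.1 hv.2


noncomputable def Sreg : Set (ℝ × ℝ) :=
  {p | |p.2| ≤ 1 ∧ |p.1| + Real.sqrt 3 * |p.2| ≤ 1 + Real.sqrt 3}

lemma Sreg_closed : IsClosed Sreg := by
  have h1 : IsClosed {p : ℝ × ℝ | |p.2| ≤ 1} :=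
    isClosed_le (continuous_snd.abs) continuous_const
  have h2 : IsClosed {p : ℝ × ℝ | |p.1| + Real.sqrt 3 * |p.2| ≤ 1 + Real.sqrt 3} :=
    isClosed_le (continuous_fst.abs.add (continuous_const.mul continuous_snd.abs))
      continuous_const
  exact h1.inter h2

lemma Sreg_compact : IsCompact Sreg := by
  apply Metric.isCompact_of_isClosed_isBounded Sreg_closed
  apply (Metric.isBounded_Icc ((-(1+Real.sqrt 3), -1) : ℝ × ℝ) (1+Real.sqrt 3, 1)).subset
  intro p hp
  obtain ⟨h1, h2⟩ := hp
  have hs0 := s3_pos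
  have ha := abs_le.mp h1
  have hb : |p.1| ≤ 1 + Real.sqrt 3 := by nlinarith [abs_nonneg p.2]
  have hb' := abs_le.mp hb
  exact ⟨⟨hb'.1, ha.1⟩, ⟨hb'.2, ha.2⟩⟩

lemma Sreg_meas : MeasurableSet Sreg := Sreg_closed.measurableSet

lemma integrableOn_Sreg (f : ℝ × ℝ → ℝ) (hf : Continuous f) : IntegrableOn f Sreg :=
  hf.continuousOn.integrableOn_compact Sreg_compact

lemma integral_Sreg (f : ℝ × ℝ → ℝ) (hf : Continuous f) (F : ℝ → ℝ)
    (hFeq : ∀ y, |y| ≤ 1 →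
      (∫ x in (-(1 + Real.sqrt 3 - Real.sqrt 3 * |y|))..(1 + Real.sqrt 3 - Real.sqrt 3 * |y|),
        f (x, y)) = F y) :
    (∫ p in Sreg, f p) = ∫ y in (-1:ℝ)..1, F y := by
  have hs0 := s3_pos
  rw [← integral_indicator Sreg_meas]
  have hInt : Integrable (Sreg.indicator f) ((volume : Measure ℝ).prod volume) := by
    rw [← Measure.volume_eq_prod ℝ ℝ]
    exact (integrable_indicator_iff Sreg_meas).2 (integrableOn_Sreg f hf)
  rw [Measure.volume_eq_prod ℝ ℝ, MeasureTheory.integral_prod_symm _ hInt]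
  have inner : ∀ y : ℝ, (∫ x, Sreg.indicator f (x, y)) =
      (Icc (-1:ℝ) 1).indicator F y := by
    intro y
    classical
    by_cases hy : |y| ≤ 1
    · have hg1 : (1:ℝ) ≤ 1 + Real.sqrt 3 - Real.sqrt 3 * |y| := by nlinarith [abs_nonneg y]
      have hfun : (fun x => Sreg.indicator f (x, y)) =
          (Icc (-(1 + Real.sqrt 3 - Real.sqrt 3 * |y|))
            (1 + Real.sqrt 3 - Real.sqrt 3 * |y|)).indicator (fun x => f (x, y)) := by
        funext x
        have hiff : ((x, y) ∈ Sreg) ↔ x ∈ Icc (-(1 + Real.sqrt 3 - Real.sqrt 3 * |y|))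
            (1 + Real.sqrt 3 - Real.sqrt 3 * |y|) := by
          constructor
          · rintro ⟨-, h2⟩
            have h3 := abs_le.mp (by linarith : |x| ≤ 1 + Real.sqrt 3 - Real.sqrt 3 * |y|)
            exact ⟨h3.1, h3.2⟩
          · rintro ⟨h1, h2⟩
            refine ⟨hy, ?_⟩
            have : |x| ≤ 1 + Real.sqrt 3 - Real.sqrt 3 * |y| := abs_le.mpr ⟨h1, h2⟩
            linarith
        rw [Set.indicator_apply, Set.indicator_apply, if_congr hiff rfl rfl]
      rw [hfun, integral_indicator measurableSet_Icc, integral_Icc_eq_integral_Ioc,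
        ← intervalIntegral.integral_of_le (by linarith), hFeq y hy]
      exact (Set.indicator_of_mem (mem_Icc.mpr (abs_le.mp hy)) F).symm
    · have hfun : (fun x => Sreg.indicator f (x, y)) = fun _ => (0:ℝ) := by
        funext x
        exact Set.indicator_of_notMem (fun hmem => hy hmem.1) _
      rw [hfun, integral_zero]
      exact (Set.indicator_of_notMem (fun hmem => hy (abs_le.mpr (mem_Icc.mp hmem))) F).symm
  simp_rw [inner]
  rw [integral_indicator measurableSet_Icc, integral_Icc_eq_integral_Ioc,
    ← intervalIntegral.integral_of_le (by norm_num : (-1:ℝ) ≤ 1)]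

lemma even_int (F : ℝ → ℝ) (hF : Continuous F) (hsym : ∀ y, F (-y) = F y) :
    ∫ y in (-1:ℝ)..1, F y = 2 * ∫ y in (0:ℝ)..1, F y := by
  have h1 : IntervalIntegrable F volume (-1) 0 := hF.intervalIntegrable _ _
  have h2 : IntervalIntegrable F volume 0 1 := hF.intervalIntegrable _ _
  rw [← intervalIntegral.integral_add_adjacent_intervals h1 h2]
  have h : ∫ y in (-1:ℝ)..0, F y = ∫ y in (0:ℝ)..1, F y := by
    have h := intervalIntegral.integral_comp_neg (a := (0:ℝ)) (b := 1) F
    simp only [hsym, neg_zero] at h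
    exact h.symm
  rw [h]; ring

lemma intx : (∫ p in Sreg, p.1 ^ 2) = 16/3 + 3*Real.sqrt 3 := by
  have hs0 := s3_pos
  have hs2 := s3_sq
  have hsne : Real.sqrt 3 ≠ 0 := ne_of_gt hs0
  have hcF : Continuous (fun y : ℝ => 2*(1+Real.sqrt 3-Real.sqrt 3*|y|)^3/3) := by
    fun_prop
  rw [integral_Sreg (fun p => p.1^2) (by fun_prop)
      (fun y => 2*(1+Real.sqrt 3-Real.sqrt 3*|y|)^3/3)
      (by
        intro y hy
        show (∫ x in (-(1 + Real.sqrt 3 - Real.sqrt 3 * |y|))..(1 + Real.sqrt 3 - Real.sqrt 3 * |y|), x^2) = _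
        rw [integral_pow]
        ring)]
  rw [even_int _ hcF (by intro y; rw [abs_neg])]
  have hcongr : ∫ y in (0:ℝ)..1, 2*(1+Real.sqrt 3-Real.sqrt 3*|y|)^3/3
      = ∫ y in (0:ℝ)..1, 2*(1+Real.sqrt 3-Real.sqrt 3*y)^3/3 := by
    apply intervalIntegral.integral_congr
    intro y hy
    rw [Set.uIcc_of_le (by norm_num : (0:ℝ) ≤ 1)] at hy
    simp only [abs_of_nonneg hy.1]
  rw [hcongr]
  have key : ∫ y in (0:ℝ)..1, 2*(1+Real.sqrt 3-Real.sqrt 3*y)^3/3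
      = (-((1+Real.sqrt 3-Real.sqrt 3*1)^4)/(6*Real.sqrt 3))
        - (-((1+Real.sqrt 3-Real.sqrt 3*0)^4)/(6*Real.sqrt 3)) := by
    apply intervalIntegral.integral_eq_sub_of_hasDerivAt
      (f := fun y : ℝ => -((1+Real.sqrt 3-Real.sqrt 3*y)^4)/(6*Real.sqrt 3))
    · intro y _
      have h1 : HasDerivAt (fun y : ℝ => 1+Real.sqrt 3-Real.sqrt 3*y) (-Real.sqrt 3) y := by
        simpa using ((hasDerivAt_id y).const_mul (Real.sqrt 3)).const_sub (1+Real.sqrt 3)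
      have h2 := (h1.pow 4).neg.div_const (6*Real.sqrt 3)
      refine h2.congr_deriv ?_
      field_simp
      ring
    · exact (by fun_prop : Continuous fun y : ℝ => 2*(1+Real.sqrt 3-Real.sqrt 3*y)^3/3).intervalIntegrable _ _
  rw [key]
  have h4 : (1+Real.sqrt 3-Real.sqrt 3*1) = 1 := by ring
  rw [h4]
  field_simp
  ring_nf
  nlinarith [hs2, hs0]

lemma inty : (∫ p in Sreg, p.2 ^ 2) = 4/3 + Real.sqrt 3/3 := by
  have hs0 := s3_pos
  have hs2 := s3_sq
  have hcF : Continuous (fun y : ℝ => y^2 * (2*(1+Real.sqrt 3-Real.sqrt 3*|y|))) := by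
    fun_prop
  rw [integral_Sreg (fun p => p.2^2) (by fun_prop)
      (fun y => y^2 * (2*(1+Real.sqrt 3-Real.sqrt 3*|y|)))
      (by
        intro y hy
        show (∫ _x in (-(1 + Real.sqrt 3 - Real.sqrt 3 * |y|))..(1 + Real.sqrt 3 - Real.sqrt 3 * |y|), y^2) = _
        rw [intervalIntegral.integral_const]
        simp only [smul_eq_mul]
        ring)]
  rw [even_int _ hcF (by intro y; rw [abs_neg, neg_pow]; ring)]
  have hcongr : ∫ y in (0:ℝ)..1, y^2 * (2*(1+Real.sqrt 3-Real.sqrt 3*|y|))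
      = ∫ y in (0:ℝ)..1, y^2 * (2*(1+Real.sqrt 3-Real.sqrt 3*y)) := by
    apply intervalIntegral.integral_congr
    intro y hy
    rw [Set.uIcc_of_le (by norm_num : (0:ℝ) ≤ 1)] at hy
    simp only [abs_of_nonneg hy.1]
  rw [hcongr]
  have key : ∫ y in (0:ℝ)..1, y^2 * (2*(1+Real.sqrt 3-Real.sqrt 3*y))
      = (2*(1+Real.sqrt 3)*1^3/3 - Real.sqrt 3*1^4/2)
        - (2*(1+Real.sqrt 3)*0^3/3 - Real.sqrt 3*0^4/2) := by
    apply intervalIntegral.integral_eq_sub_of_hasDerivAt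
      (f := fun y : ℝ => 2*(1+Real.sqrt 3)*y^3/3 - Real.sqrt 3*y^4/2)
    · intro y _
      have h1 : HasDerivAt (fun y : ℝ => 2*(1+Real.sqrt 3)*y^3/3)
          (2*(1+Real.sqrt 3)*y^2) y := by
        have := ((hasDerivAt_pow 3 y).const_mul (2*(1+Real.sqrt 3))).div_const 3
        refine this.congr_deriv ?_
        ring
      have h2 : HasDerivAt (fun y : ℝ => Real.sqrt 3*y^4/2) (2*Real.sqrt 3*y^3) y := by
        have := ((hasDerivAt_pow 4 y).const_mul (Real.sqrt 3)).div_const 2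
        refine this.congr_deriv ?_
        ring
      have := h1.sub h2
      refine this.congr_deriv ?_
      ring
    · exact (by fun_prop : Continuous fun y : ℝ => y^2 * (2*(1+Real.sqrt 3-Real.sqrt 3*y))).intervalIntegrable _ _
  rw [key]
  ring

lemma hex_preimage : Hex = (MeasurableEquiv.piFinTwo fun _ : Fin 2 => ℝ) ⁻¹' Sreg := by
  rw [hex_eq]; rfl

lemma transfer (f : ℝ × ℝ → ℝ) : (∫ v in Hex, f (v 0, v 1)) = ∫ p in Sreg, f p := by
  have h := (volume_preserving_piFinTwo fun _ : Fin 2 => ℝ).setIntegral_preimage_emb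
    (MeasurableEquiv.measurableEmbedding _) f Sreg
  rw [hex_preimage]
  exact h

lemma hexX : (∫ v in Hex, (v 0)^2) = 16/3 + 3 * Real.sqrt 3 :=
  (transfer fun p => p.1^2).trans intx

lemma hexY : (∫ v in Hex, (v 1)^2) = 4/3 + Real.sqrt 3 / 3 :=
  (transfer fun p => p.2^2).trans inty

theorem stmt_15 :
    (∫ v in Hex, (v 0)^2) = 16/3 + 3 * Real.sqrt 3 ∧
    (∫ v in Hex, (v 1)^2) = 4/3 + Real.sqrt 3 / 3 ∧
    ¬ ∃ l : ℝ,
      hexRule l (fun v => (v 0)^2) = ∫ v in Hex, (v 0)^2 ∧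
      hexRule l (fun v => (v 1)^2) = ∫ v in Hex, (v 1)^2 := by
  refine ⟨hexX, hexY, ?_⟩
  rintro ⟨l, h1, h2⟩
  rw [hexX] at h1
  rw [hexY] at h2
  simp only [hexRule, Matrix.cons_val_zero, Matrix.cons_val_one, Matrix.head_cons] at h1 h2
  have hs0 := s3_pos
  have hs2 := s3_sq
  nlinarith [h1, h2, hs2, hs0, sq_nonneg (1 - l)]
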